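/- There exists a family of instances on which every best-effort algorithm achieves competitive ratio at least k: for every k ≥ 2 there is a sequence of k² queries, all with cardinality constraint exactly k, such that a best-effort algorithm commits exactly one group (k queries) while the offline optimum commits k disjoint groups (k² queries); hence the competitive ratio of best-effort algorithms is exactly k. -/
import Mathlib


/-- A group of queries is committable if its size is exactly `k` and there is a common
point in all its members' selection sets. -/
def Committable {ι β : Type*} (sel : ι → Finset β) (k : ℕ) (G : Finset ι) : Prop :=
  G.card = k ∧ ∃ a : β, ∀ q ∈ G, a ∈ sel q

/-- Hard instance for best-effort algorithms: for every `k ≥ 2` there are `k²` queries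
(indexed by `Fin k × Fin k`), all with cardinality constraint exactly `k`, such that
the central group is committable (and is the only committable group among the central
queries, so a best-effort algorithm commits it), after which no committable group
remains; while the offline optimum commits `k` pairwise disjoint star groups covering
all `k²` queries. Hence the competitive ratio of best-effort algorithms is `k`. -/
theorem stmt_6 (k : ℕ) (hk : 2 ≤ k) :
    ∃ sel : Fin k × Fin k → Finset (Option (Fin k)),
      -- the central group {q_1, ..., q_k} is committable
      Committable sel k
        (Finset.univ.image fun i : Fin k => (i, (⟨0, by omega⟩ : Fin k))) ∧
      -- each of the k star groups is committable
      (∀ i : Fin k, Committable sel k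
        (Finset.univ.image fun j : Fin k => (i, j))) ∧
      -- the star groups are pairwise disjoint ...
      ((Set.univ : Set (Fin k)).Pairwise fun i i' =>
        Disjoint (Finset.univ.image fun j : Fin k => ((i, j) : Fin k × Fin k))
                 (Finset.univ.image fun j : Fin k => ((i', j) : Fin k × Fin k))) ∧
      -- ... and cover all k² queries, so the optimum commits all k² queries
      (Finset.univ.biUnion
          (fun i : Fin k => Finset.univ.image fun j : Fin k => ((i, j) : Fin k × Fin k))
        = Finset.univ) ∧
      -- the only committable subgroup of the central queries is the whole central group
      (∀ G ⊆ Finset.univ.image fun i : Fin k => (i, (⟨0, by omega⟩ : Fin k)),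
        Committable sel k G →
          G = Finset.univ.image fun i : Fin k => (i, (⟨0, by omega⟩ : Fin k))) ∧
      -- after the central group is committed, no committable group remains
      (∀ G : Finset (Fin k × Fin k),
        (∀ q ∈ G, q.2 ≠ (⟨0, by omega⟩ : Fin k)) → ¬ Committable sel k G) := by
  have hk0 : 0 < k := by omega
  set z : Fin k := ⟨0, by omega⟩ with hz
  refine ⟨fun p => if p.2 = z then {none, some p.1} else {some p.1}, ?_, ?_, ?_, ?_, ?_, ?_⟩
  · refine ⟨?_, ⟨none, ?_⟩⟩
    · rw [Finset.card_image_of_injective _ (fun a b h => by simpa using congrArg Prod.fst h)]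
      simp
    · intro q hq
      simp only [Finset.mem_image, Finset.mem_univ, true_and] at hq
      obtain ⟨i, rfl⟩ := hq
      simp
  · intro i
    refine ⟨?_, ⟨some i, ?_⟩⟩
    · rw [Finset.card_image_of_injective _ (fun a b h => by simpa using h)]
      simp
    · intro q hq
      simp only [Finset.mem_image, Finset.mem_univ, true_and] at hq
      obtain ⟨j, rfl⟩ := hq
      by_cases h : j = z <;> simp [h]
  · intro i _ i' _ hii
    rw [Finset.disjoint_left]
    intro a ha ha'
    simp only [Finset.mem_image, Finset.mem_univ, true_and] at ha ha'
    obtain ⟨j, rfl⟩ := ha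
    obtain ⟨j', hj'⟩ := ha'
    exact hii (by simpa using congrArg Prod.fst hj'.symm)
  · ext ⟨i, j⟩
    simp only [Finset.mem_biUnion, Finset.mem_image, Finset.mem_univ, true_and, iff_true]
    exact ⟨i, j, rfl⟩
  · intro G hG hC
    apply Finset.eq_of_subset_of_card_le hG
    rw [hC.1, Finset.card_image_of_injective _ (fun a b h => by simpa using congrArg Prod.fst h)]
    simp
  · rintro G hG ⟨hcard, a, ha⟩
    -- every member of G has sel = {some p.1}, so a = some p.1 for all p ∈ G
    have key : ∀ p ∈ G, a = some p.1 := by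
      intro p hp
      have := ha p hp
      simp only [if_neg (hG p hp)] at this
      simpa using this
    -- hence G injects into second coordinates avoiding z
    have hsub : G ⊆ Finset.univ.image fun j : Fin k =>
        ((Option.getD a z, j) : Fin k × Fin k) := by
      intro p hp
      have h1 := key p hp
      simp only [Finset.mem_image, Finset.mem_univ, true_and]
      exact ⟨p.2, by rw [h1]; simp⟩
    have hz' : (Option.getD a z, z) ∉ G := fun h => hG _ h rfl
    have : G ⊆ (Finset.univ.image fun j : Fin k =>
        ((Option.getD a z, j) : Fin k × Fin k)) \ {(Option.getD a z, z)} := by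
      intro p hp
      rw [Finset.mem_sdiff]
      refine ⟨hsub hp, ?_⟩
      simp only [Finset.mem_singleton]
      rintro rfl
      exact hz' hp
    have hle := Finset.card_le_card this
    have hcard2 : ((Finset.univ.image fun j : Fin k =>
        ((Option.getD a z, j) : Fin k × Fin k)) \ {(Option.getD a z, z)}).card = k - 1 := by
      rw [Finset.card_sdiff_of_subset (by simp [Finset.singleton_subset_iff])]
      rw [Finset.card_image_of_injective _ (fun x y h => by simpa using h)]
      simp
    omega
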